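/- Let μ be an offspring distribution with μ(1) > 0, fix k with a μ-BGW tree conditionable on k leaves, and let a be a tree with k leaves, no vertices of out-degree 1, |a| vertices, and φ_i(a) vertices with i children. Let T be a μ-BGW tree and R its reduced tree. Then P(R = a and T has n vertices and k leaves) = C(n-1, |a|-1) · μ(0)^k · μ(1)^{n-|a|} · ∏_{i≥2} μ(i)^{φ_i(a)}. -/

import Mathlib

/-- Rooted planar trees. -/
inductive PTree where
  | node : List PTree → PTree

namespace PTree

/-- Number of vertices. -/
def size : PTree → ℕ
  | .node ts => 1 + (ts.attach.map (fun t => size t.1)).sum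
decreasing_by
  have := List.sizeOf_lt_of_mem t.2
  simp only [PTree.node.sizeOf_spec]; omega

/-- Number of leaves (vertices with no children). -/
def leaves : PTree → ℕ
  | .node [] => 1
  | .node ts => (ts.attach.map (fun t => leaves t.1)).sum
decreasing_by
  have := List.sizeOf_lt_of_mem t.2
  simp only [PTree.node.sizeOf_spec]; omega

/-- BGW weight of a tree: `∏_{u ∈ τ} μ(c_u(τ))`. -/
def weight (μ : ℕ → ℝ) : PTree → ℝ
  | .node ts => μ ts.length * (ts.attach.map (fun t => weight μ t.1)).prod
decreasing_by
  have := List.sizeOf_lt_of_mem t.2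
  simp only [PTree.node.sizeOf_spec]; omega

/-- Number of vertices with exactly `i` children. -/
def countDeg (i : ℕ) : PTree → ℕ
  | .node ts => (if ts.length = i then 1 else 0) + (ts.attach.map (fun t => countDeg i t.1)).sum
decreasing_by
  have := List.sizeOf_lt_of_mem t.2
  simp only [PTree.node.sizeOf_spec]; omega

/-- Reduced tree for the leaf conditioning: erase all vertices with exactly one child. -/
def reduce : PTree → PTree
  | .node [t] => reduce t
  | .node ts => .node (ts.attach.map (fun t => reduce t.1))
decreasing_by
  · simp only [PTree.node.sizeOf_spec]; simp; omega
  · have := List.sizeOf_lt_of_mem t.2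
    simp only [PTree.node.sizeOf_spec]; omega

/-- No vertex has exactly one child. -/
def noUnary : PTree → Prop
  | .node ts => ts.length ≠ 1 ∧ ∀ t ∈ ts.attach, noUnary t.1
decreasing_by
  have := List.sizeOf_lt_of_mem t.2
  simp only [PTree.node.sizeOf_spec]; omega

end PTree

open scoped Classical

namespace PTree

-- ## auxiliary lemmas

theorem size_node (ts : List PTree) : size (.node ts) = 1 + (ts.map size).sum := by
  rw [size, List.attach_map_val]

theorem weight_node (μ : ℕ → ℝ) (ts : List PTree) :
    weight μ (.node ts) = μ ts.length * (ts.map (weight μ)).prod := by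
  rw [weight, List.attach_map_val]

theorem countDeg_node (i : ℕ) (ts : List PTree) :
    countDeg i (.node ts) = (if ts.length = i then 1 else 0) + (ts.map (countDeg i)).sum := by
  rw [countDeg, List.attach_map_val]

theorem leaves_nil : leaves (.node []) = 1 := by rw [leaves]

theorem leaves_node (ts : List PTree) (h : ts ≠ []) :
    leaves (.node ts) = (ts.map leaves).sum := by
  match ts, h with
  | t :: ts, _ => rw [leaves, List.attach_map_val]; simp

theorem reduce_single (t : PTree) : reduce (.node [t]) = reduce t := by rw [reduce]

theorem reduce_node (ts : List PTree) (h : ts.length ≠ 1) :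
    reduce (.node ts) = .node (ts.map reduce) := by
  match ts, h with
  | [], _ =>
    rw [reduce]
    · rfl
    · simp
  | t :: u :: ts, _ =>
    rw [reduce, List.attach_map_val]
    simp

theorem noUnary_node (ts : List PTree) :
    noUnary (.node ts) ↔ ts.length ≠ 1 ∧ ∀ t ∈ ts, noUnary t := by
  rw [noUnary]
  simp

theorem size_pos (t : PTree) : 1 ≤ size t := by
  match t with
  | .node ts => rw [size_node]; omega

theorem leaves_pos (t : PTree) : 1 ≤ leaves t := by
  match t with
  | .node [] => rw [leaves_nil]
  | .node (t :: ts) =>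
    rw [leaves_node _ (by simp)]
    have := leaves_pos t
    simp only [List.map_cons, List.sum_cons]
    omega
termination_by sizeOf t
decreasing_by
  simp only [PTree.node.sizeOf_spec, List.cons.sizeOf_spec]; omega

end PTree

namespace PTree

theorem strongRec (P : PTree → Prop) (h : ∀ ts, (∀ t ∈ ts, P t) → P (.node ts)) :
    ∀ t, P t
  | .node ts => h ts (fun t ht => strongRec P h t)
termination_by t => sizeOf t
decreasing_by
  have := List.sizeOf_lt_of_mem ht
  simp only [PTree.node.sizeOf_spec]; omega

theorem leaves_reduce (t : PTree) : leaves (reduce t) = leaves t := by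
  induction t using strongRec with
  | h ts ih =>
    match ts, ih with
    | [t'], ih =>
      rw [reduce_single, leaves_node _ (by simp)]
      simp [ih t' (by simp)]
    | [], _ => rw [reduce_node _ (by simp)]; simp
    | t₁ :: t₂ :: ts, ih =>
      rw [reduce_node _ (by simp), leaves_node _ (by simp), leaves_node _ (by simp),
        List.map_map]
      congr 1
      apply List.map_congr_left
      intro t ht
      exact ih t ht

theorem length_le_sum_size (ts : List PTree) : ts.length ≤ (ts.map size).sum := by
  induction ts with
  | nil => simp
  | cons t ts ih => have := size_pos t; simp only [List.map_cons, List.sum_cons, List.length_cons]; omega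

theorem finite_lists (S : Set PTree) (hS : S.Finite) (m : ℕ) :
    {ts : List PTree | ts.length ≤ m ∧ ∀ t ∈ ts, t ∈ S}.Finite := by
  induction m with
  | zero =>
    apply Set.Finite.subset (Set.finite_singleton ([] : List PTree))
    rintro ts ⟨h1, -⟩
    simp [List.length_eq_zero_iff.mp (Nat.le_zero.mp h1)]
  | succ m ih =>
    apply Set.Finite.subset
      ((Set.finite_singleton ([] : List PTree)).union
        (((hS.prod ih).image (fun p => p.1 :: p.2))))
    rintro ts ⟨h1, h2⟩
    match ts with
    | [] => exact Or.inl rfl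
    | t :: ts =>
      refine Or.inr ⟨(t, ts), ⟨h2 t (by simp), ?_, fun u hu => h2 u (by simp [hu])⟩, rfl⟩
      show ts.length ≤ m
      simp only [List.length_cons] at h1; omega

theorem finite_size_le : ∀ n, {t : PTree | size t ≤ n}.Finite := by
  intro n
  induction n with
  | zero =>
    convert Set.finite_empty
    ext t
    have := size_pos t
    simp; omega
  | succ n ih =>
    apply Set.Finite.subset (((finite_lists _ ih n).image (fun ts => PTree.node ts)))
    intro t ht
    match t with
    | .node ts =>
      refine ⟨ts, ⟨?_, ?_⟩, rfl⟩
      · have h := length_le_sum_size ts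
        simp only [Set.mem_setOf_eq, size_node] at ht ⊢
        omega
      · intro u hu
        have h1 : size u ≤ (ts.map size).sum := List.single_le_sum (by simp) _ (List.mem_map_of_mem hu)
        simp only [Set.mem_setOf_eq, size_node] at ht ⊢
        omega

end PTree

theorem sum_range_choose_le (a n : ℕ) :
    ∑ i ∈ Finset.range (n + 1), Nat.choose i a = Nat.choose (n + 1) (a + 1) := by
  rcases le_or_gt a n with h | h
  · rw [Finset.range_eq_Ico, ← Finset.sum_Ico_consecutive _ (Nat.zero_le a) (by omega : a ≤ n + 1),
      Finset.sum_eq_zero (fun i hi => Nat.choose_eq_zero_of_lt (Finset.mem_Ico.mp hi).2),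
      zero_add, Finset.Ico_add_one_right_eq_Icc, Nat.sum_Icc_choose]
  · rw [Finset.sum_eq_zero (fun i hi => Nat.choose_eq_zero_of_lt
      (by have := Finset.mem_range.mp hi; omega)),
      Nat.choose_eq_zero_of_lt (by omega)]

theorem vandermonde_upper (a : ℕ) : ∀ (n b : ℕ),
    ∑ i ∈ Finset.range (n + 1), Nat.choose i a * Nat.choose (n - i) b
      = Nat.choose (n + 1) (a + b + 1) := by
  intro n
  induction n with
  | zero =>
    intro b
    simp only [Finset.range_one, Finset.sum_singleton, Nat.zero_sub]
    match a, b with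
    | 0, 0 => simp
    | 0, b + 1 =>
      rw [show Nat.choose (0 + 1) (0 + (b + 1) + 1) = 0 from Nat.choose_eq_zero_of_lt (by omega),
        Nat.choose_zero_succ]
      simp
    | a + 1, b =>
      rw [Finset.range_one, Finset.sum_singleton, Nat.choose_zero_succ,
        show Nat.choose (0 + 1) (a + 1 + b + 1) = 0 from Nat.choose_eq_zero_of_lt (by omega)]
      simp
  | succ n ih =>
    intro b
    match b with
    | 0 =>
      simp only [Nat.choose_zero_right, mul_one]
      rw [sum_range_choose_le]
    | b + 1 =>
      rw [Finset.sum_range_succ, Nat.sub_self, Nat.choose_zero_succ, mul_zero, add_zero]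
      have hcongr : ∀ i ∈ Finset.range (n + 1),
          Nat.choose i a * Nat.choose (n + 1 - i) (b + 1)
            = Nat.choose i a * Nat.choose (n - i) b + Nat.choose i a * Nat.choose (n - i) (b + 1) := by
        intro i hi
        have hi' := Finset.mem_range.mp hi
        have : n + 1 - i = (n - i) + 1 := by omega
        rw [this, Nat.choose_succ_succ, mul_add]
      rw [Finset.sum_congr rfl hcongr, Finset.sum_add_distrib, ih b, ih (b + 1)]
      have : a + (b + 1) + 1 = (a + b + 1) + 1 := by ring
      rw [this, Nat.choose_succ_succ (n + 1) (a + b + 1)]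

namespace PTree

open scoped Classical

/-- The list of children of the root. -/
def children : PTree → List PTree
  | .node ts => ts

/-- `node` as an equivalence. -/
def enode : List PTree ≃ PTree where
  toFun := node
  invFun := children
  left_inv := fun ts => rfl
  right_inv := fun t => by cases t; rfl

noncomputable def fgen (μ : ℕ → ℝ) (a : PTree) (n : ℕ) : ℝ :=
  ∑' τ : PTree, if τ.size = n ∧ τ.reduce = a then τ.weight μ else 0

noncomputable def ggen (μ : ℕ → ℝ) (as : List PTree) (p : ℕ) : ℝ :=
  ∑' us : List PTree,
    if us.map reduce = as ∧ (us.map size).sum = p then (us.map (weight μ)).prod else 0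

theorem summable_fgen (μ : ℕ → ℝ) (a : PTree) (n : ℕ) :
    Summable (fun τ : PTree => if τ.size = n ∧ τ.reduce = a then τ.weight μ else 0) := by
  apply summable_of_ne_finset_zero (s := (finite_size_le n).toFinset)
  intro τ hτ
  rw [if_neg]
  rintro ⟨h1, -⟩
  exact hτ (by simp [Set.Finite.mem_toFinset, h1])

theorem mem_glist {us : List PTree} {as : List PTree} {p : ℕ}
    (h : us.map reduce = as ∧ (us.map size).sum = p) :
    us ∈ (finite_lists {t | size t ≤ p} (finite_size_le p) as.length).toFinset := by
  rw [Set.Finite.mem_toFinset]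
  constructor
  · rw [← h.1, List.length_map]
  · intro t ht
    have : size t ≤ (us.map size).sum := List.single_le_sum (by simp) _ (List.mem_map_of_mem ht)
    simp only [Set.mem_setOf_eq]
    omega

theorem summable_ggen (μ : ℕ → ℝ) (as : List PTree) (p : ℕ) :
    Summable (fun us : List PTree =>
      if us.map reduce = as ∧ (us.map size).sum = p then (us.map (weight μ)).prod else 0) := by
  apply summable_of_ne_finset_zero
    (s := (finite_lists {t | size t ≤ p} (finite_size_le p) as.length).toFinset)
  intro us hus
  rw [if_neg]
  intro h
  exact hus (mem_glist h)

theorem fgen_zero (μ : ℕ → ℝ) (a : PTree) : fgen μ a 0 = 0 := by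
  rw [fgen]
  convert tsum_zero with τ
  rw [if_neg]
  rintro ⟨h1, -⟩
  have := size_pos τ
  omega

theorem ggen_nil (μ : ℕ → ℝ) (p : ℕ) : ggen μ [] p = if p = 0 then 1 else 0 := by
  rw [ggen, tsum_eq_single ([] : List PTree)]
  · simp [eq_comm]
  · intro us hus
    rw [if_neg]
    rintro ⟨h1, -⟩
    exact hus (by simpa using congrArg List.length h1)

end PTree

namespace PTree

open scoped Classical

theorem fgen_succ (μ : ℕ → ℝ) (as : List PTree) (hL : as.length ≠ 1) (n : ℕ) :
    fgen μ (.node as) (n + 1)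
      = μ 1 * fgen μ (.node as) n + μ as.length * ggen μ as n := by
  classical
  set F : PTree → ℝ :=
    fun τ => if τ.size = n + 1 ∧ τ.reduce = .node as then τ.weight μ else 0 with hF
  set F1 : List PTree → ℝ :=
    fun ts => if ts.length = 1 then F (.node ts) else 0 with hF1
  set F2 : List PTree → ℝ :=
    fun ts => if ts.length = 1 then 0 else F (.node ts) with hF2
  have hsplit : ∀ ts : List PTree, F (.node ts) = F1 ts + F2 ts := by
    intro ts
    by_cases h : ts.length = 1 <;> simp [hF1, hF2, h]
  -- F1 evaluation
  have hF1eq : ∀ t : PTree,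
      F1 [t] = μ 1 * (if t.size = n ∧ t.reduce = .node as then t.weight μ else 0) := by
    intro t
    have h1 : size (.node [t]) = 1 + size t := by rw [size_node]; simp
    have h2 : weight μ (.node [t]) = μ 1 * weight μ t := by rw [weight_node]; simp
    simp only [hF1, hF, if_pos (by simp : ([t] : List PTree).length = 1), reduce_single, h1, h2]
    by_cases hc : size t = n ∧ reduce t = PTree.node as
    · rw [if_pos ⟨by omega, hc.2⟩, if_pos hc]
    · rw [if_neg (by rw [not_and] at hc ⊢; intro h; exact hc (by omega)), if_neg hc, mul_zero]
  -- F2 evaluation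
  have hF2eq : ∀ ts : List PTree,
      F2 ts = μ as.length *
        (if ts.map reduce = as ∧ (ts.map size).sum = n then (ts.map (weight μ)).prod else 0) := by
    intro ts
    by_cases h : ts.length = 1
    · rw [hF2]
      simp only [if_pos h]
      rw [if_neg, mul_zero]
      rintro ⟨h1, -⟩
      rw [← h1, List.length_map] at hL
      exact hL h
    · rw [hF2]
      simp only [if_neg h, hF]
      rw [size_node, reduce_node _ h, weight_node]
      by_cases hc : ts.map reduce = as ∧ (ts.map size).sum = n
      · rw [if_pos ⟨by omega, by rw [hc.1]⟩, if_pos hc]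
        have : ts.length = as.length := by rw [← hc.1, List.length_map]
        rw [this]
      · rw [if_neg, if_neg hc, mul_zero]
        rintro ⟨h1, h2⟩
        exact hc ⟨by injection h2, by omega⟩
  -- summabilities
  have hsum1 : Summable F1 := by
    apply summable_of_ne_finset_zero
      (s := Finset.image children (finite_size_le (n + 1)).toFinset)
    intro ts hts
    by_cases h : ts.length = 1
    · simp only [hF1, if_pos h, hF]
      rw [if_neg]
      rintro ⟨h1, -⟩
      exact hts (Finset.mem_image.mpr ⟨.node ts, by simp [Set.Finite.mem_toFinset, h1], rfl⟩)
    · simp [hF1, h]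
  have hsum2 : Summable F2 := by
    apply summable_of_ne_finset_zero
      (s := Finset.image children (finite_size_le (n + 1)).toFinset)
    intro ts hts
    by_cases h : ts.length = 1
    · simp [hF2, h]
    · simp only [hF2, if_neg h, hF]
      rw [if_neg]
      rintro ⟨h1, -⟩
      exact hts (Finset.mem_image.mpr ⟨.node ts, by simp [Set.Finite.mem_toFinset, h1], rfl⟩)
  have step1 : fgen μ (.node as) (n + 1) = ∑' ts : List PTree, F (.node ts) :=
    (Equiv.tsum_eq enode F).symm
  rw [step1]
  have step2 : ∑' ts : List PTree, F (.node ts) = (∑' ts, F1 ts) + ∑' ts, F2 ts := by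
    rw [← Summable.tsum_add hsum1 hsum2]
    exact tsum_congr hsplit
  rw [step2]
  congr 1
  · -- singleton part
    have hrange : Function.support F1 ⊆ Set.range (fun t : PTree => [t]) := by
      intro ts hts
      rcases ts with _ | ⟨t, ts⟩
      · simp [hF1] at hts
      · rcases ts with _ | ⟨u, ts⟩
        · exact ⟨t, rfl⟩
        · simp [hF1] at hts
    have hinj : Function.Injective (fun t : PTree => [t]) := by
      intro a b h; injection h
    rw [← hinj.tsum_eq hrange]
    rw [tsum_congr hF1eq, tsum_mul_left]
    rfl
  · rw [tsum_congr hF2eq, tsum_mul_left]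
    rfl

end PTree

namespace PTree

open scoped Classical

theorem ggen_cons (μ : ℕ → ℝ) (b : PTree) (bs : List PTree) (p : ℕ) :
    ggen μ (b :: bs) p
      = ∑ q ∈ Finset.range (p + 1), fgen μ b q * ggen μ bs (p - q) := by
  classical
  set G : List PTree → ℝ := fun us =>
    if us.map reduce = b :: bs ∧ (us.map size).sum = p then (us.map (weight μ)).prod else 0
    with hG
  set A : ℕ → PTree → ℝ := fun q u =>
    if u.size = q ∧ u.reduce = b then u.weight μ else 0 with hA
  set B : ℕ → List PTree → ℝ := fun r vs =>
    if vs.map reduce = bs ∧ (vs.map size).sum = r then (vs.map (weight μ)).prod else 0 with hB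
  have hinj : Function.Injective (fun x : PTree × List PTree => x.1 :: x.2) := by
    intro x y h
    simp only [List.cons.injEq] at h
    exact Prod.ext h.1 h.2
  have hrange : Function.support G ⊆ Set.range (fun x : PTree × List PTree => x.1 :: x.2) := by
    intro us hus
    rcases us with _ | ⟨u, vs⟩
    · simp [hG] at hus
    · exact ⟨(u, vs), rfl⟩
  have step1 : ggen μ (b :: bs) p = ∑' x : PTree × List PTree, G (x.1 :: x.2) :=
    (hinj.tsum_eq hrange).symm
  -- pointwise expansion into a finite sum
  have hpt : ∀ x : PTree × List PTree,
      G (x.1 :: x.2) = ∑ q ∈ Finset.range (p + 1), A q x.1 * B (p - q) x.2 := by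
    rintro ⟨u, vs⟩
    by_cases hu : u.size ≤ p
    · rw [Finset.sum_eq_single u.size]
      · simp only [hG, hA, hB, List.map_cons, List.sum_cons, List.prod_cons, List.cons.injEq]
        have hiff : ((List.map size vs).sum = p - u.size)
            ↔ (u.size + (List.map size vs).sum = p) := by omega
        by_cases h1 : u.reduce = b <;> by_cases h2 : List.map reduce vs = bs <;>
          by_cases h3 : u.size + (List.map size vs).sum = p <;>
          simp [h1, h2, h3, hiff]
      · intro q hq hq'
        rw [hA]
        simp only
        rw [if_neg (by rintro ⟨h, -⟩; exact hq' (h ▸ rfl)), zero_mul]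
      · intro h
        exact absurd (Finset.mem_range.mpr (by omega)) h
    · rw [Finset.sum_eq_zero, hG]
      · simp only [List.map_cons, List.sum_cons, List.cons.injEq]
        rw [if_neg]
        rintro ⟨-, h⟩
        have : 0 ≤ (List.map size vs).sum := Nat.zero_le _
        omega
      · intro q hq
        have hq2 := Finset.mem_range.mp hq
        rw [hA]
        simp only
        rw [if_neg (by rintro ⟨h, -⟩; omega), zero_mul]
  rw [step1, tsum_congr hpt]
  -- swap tsum and finite sum
  have hsummand : ∀ q ∈ Finset.range (p + 1),
      Summable (fun x : PTree × List PTree => A q x.1 * B (p - q) x.2) := by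
    intro q hq
    have hq2 := Finset.mem_range.mp hq
    apply summable_of_ne_finset_zero
      (s := (finite_size_le p).toFinset ×ˢ
        (finite_lists {t | size t ≤ p - q} (finite_size_le (p - q)) bs.length).toFinset)
    intro x hx
    by_cases h1 : A q x.1 = 0
    · rw [h1, zero_mul]
    · by_cases h2 : B (p - q) x.2 = 0
      · rw [h2, mul_zero]
      · exfalso
        apply hx
        rw [Finset.mem_product]
        constructor
        · rw [hA] at h1
          simp only at h1
          rw [Set.Finite.mem_toFinset]
          by_cases hc : x.1.size = q ∧ x.1.reduce = b
          · exact Set.mem_setOf_eq ▸ (by omega : x.1.size ≤ p)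
          · exact absurd (if_neg hc) h1
        · rw [hB] at h2
          simp only at h2
          by_cases hc : x.2.map reduce = bs ∧ (x.2.map size).sum = p - q
          · exact mem_glist hc
          · exact absurd (if_neg hc) h2
  rw [Summable.tsum_finsetSum hsummand]
  apply Finset.sum_congr rfl
  intro q hq
  -- factor the product tsum
  rw [Summable.tsum_prod (hsummand q hq)]
  have : ∀ u : PTree, ∑' vs : List PTree, A q u * B (p - q) vs
      = A q u * ggen μ bs (p - q) := by
    intro u
    rw [tsum_mul_left]
    rfl
  rw [tsum_congr this, tsum_mul_right]
  rfl

end PTree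

theorem sumN (p s t : ℕ) (hs : 1 ≤ s) (ht : 1 ≤ t) :
    ∑ q ∈ Finset.range (p + 1),
        (if q = 0 then 0 else Nat.choose (q - 1) (s - 1)) *
          (if p - q = 0 then 0 else Nat.choose (p - q - 1) (t - 1))
      = if p = 0 then 0 else Nat.choose (p - 1) (s + t - 1) := by
  match p with
  | 0 => simp
  | 1 =>
    rw [if_neg (by omega), Nat.choose_eq_zero_of_lt (by omega), Finset.sum_range_succ,
      Finset.sum_range_one]
    simp
  | (m + 2) =>
    rw [if_neg (by omega)]
    rw [Finset.sum_range_succ, Nat.sub_self, if_pos rfl, mul_zero, add_zero,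
      Finset.sum_range_succ', if_pos rfl, zero_mul, add_zero]
    have hcongr : ∀ i ∈ Finset.range (m + 1),
        (if i + 1 = 0 then 0 else Nat.choose (i + 1 - 1) (s - 1)) *
            (if m + 2 - (i + 1) = 0 then 0 else Nat.choose (m + 2 - (i + 1) - 1) (t - 1))
          = Nat.choose i (s - 1) * Nat.choose (m - i) (t - 1) := by
      intro i hi
      have hi' := Finset.mem_range.mp hi
      rw [if_neg (by omega), if_neg (by omega)]
      congr 2
      omega
    rw [Finset.sum_congr rfl hcongr, vandermonde_upper (s - 1) m (t - 1)]
    congr 1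
    omega

namespace PTree

open scoped Classical

theorem tsize_pos (bs : List PTree) (h : bs ≠ []) : 1 ≤ (bs.map size).sum := by
  have := length_le_sum_size bs
  have : bs.length ≠ 0 := fun hc => h (List.length_eq_zero_iff.mp hc)
  omega

theorem ggen_closed (μ : ℕ → ℝ) (as : List PTree)
    (h : ∀ b ∈ as, ∀ m, fgen μ b m
      = if m = 0 then 0
        else (Nat.choose (m - 1) (b.size - 1) : ℝ) * μ 1 ^ (m - b.size) * b.weight μ) :
    ∀ p, ggen μ as p
      = if as = [] then (if p = 0 then 1 else 0)
        else if p = 0 then 0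
        else (Nat.choose (p - 1) ((as.map size).sum - 1) : ℝ)
          * μ 1 ^ (p - (as.map size).sum) * (as.map (weight μ)).prod := by
  induction as with
  | nil => intro p; rw [ggen_nil, if_pos rfl]
  | cons b bs ih =>
    intro p
    have hb := h b (by simp)
    have ihbs := ih (fun c hc => h c (by simp [hc]))
    rw [ggen_cons, if_neg (by simp)]
    set s := b.size with hs
    have hs1 : 1 ≤ s := size_pos b
    rcases eq_or_ne bs ([] : List PTree) with hbs | hbs
    · subst hbs
      rw [Finset.sum_eq_single p]
      · rw [Nat.sub_self, ihbs 0, if_pos rfl, if_pos rfl, mul_one, hb p]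
        simp only [List.map_cons, List.map_nil, List.sum_cons, List.sum_nil, List.prod_cons,
          List.prod_nil, add_zero, mul_one]
        rfl
      · intro q hq hq'
        rw [ihbs, if_pos rfl, if_neg (by have := Finset.mem_range.mp hq; omega), mul_zero]
      · intro hc
        exact absurd (Finset.mem_range.mpr (by omega)) hc
    · set t := (bs.map size).sum with hts
      have ht1 : 1 ≤ t := tsize_pos bs hbs
      set v := (bs.map (weight μ)).prod with hv
      have hterm : ∀ q ∈ Finset.range (p + 1),
          fgen μ b q * ggen μ bs (p - q)
            = (((if q = 0 then 0 else Nat.choose (q - 1) (s - 1)) *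
               (if p - q = 0 then 0 else Nat.choose (p - q - 1) (t - 1)) : ℕ) : ℝ)
              * (μ 1 ^ (p - (s + t)) * (b.weight μ * v)) := by
        intro q hq
        have hq' := Finset.mem_range.mp hq
        rw [hb q, ihbs (p - q), if_neg hbs]
        rcases eq_or_ne q 0 with h0 | h0
        · simp [h0]
        rcases eq_or_ne (p - q) 0 with h0' | h0'
        · simp [h0, h0']
        rw [if_neg h0, if_neg h0', if_neg h0, if_neg h0']
        rcases lt_or_ge (q - 1) (s - 1) with hlt | hle
        · rw [Nat.choose_eq_zero_of_lt hlt]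
          push_cast [Nat.choose_eq_zero_of_lt hlt]
          ring
        rcases lt_or_ge (p - q - 1) (t - 1) with hlt2 | hle2
        · rw [Nat.choose_eq_zero_of_lt hlt2]
          push_cast [Nat.choose_eq_zero_of_lt hlt2]
          ring
        · have hqs : s ≤ q := by omega
          have hqt : t ≤ p - q := by omega
          have hexp : p - (s + t) = (q - s) + ((p - q) - t) := by omega
          rw [hexp, pow_add]
          push_cast
          ring
      rw [Finset.sum_congr rfl hterm, ← Finset.sum_mul, ← Nat.cast_sum,
        sumN p s t hs1 ht1]
      rcases eq_or_ne p 0 with hp | hp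
      · simp [hp]
      · rw [if_neg hp, if_neg hp]
        simp only [List.map_cons, List.sum_cons, List.prod_cons]
        push_cast
        ring

end PTree

namespace PTree

open scoped Classical

theorem fgen_closed (μ : ℕ → ℝ) : ∀ a : PTree, a.noUnary → ∀ m : ℕ,
    fgen μ a m = if m = 0 then 0
      else (Nat.choose (m - 1) (a.size - 1) : ℝ) * μ 1 ^ (m - a.size) * a.weight μ := by
  apply strongRec
  intro ts ih hnu
  obtain ⟨hL, hnuts⟩ := (noUnary_node ts).mp hnu
  have hchild : ∀ b ∈ ts, ∀ m : ℕ, fgen μ b m = if m = 0 then 0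
      else (Nat.choose (m - 1) (b.size - 1) : ℝ) * μ 1 ^ (m - b.size) * b.weight μ :=
    fun b hb => ih b hb (hnuts b hb)
  have G := ggen_closed μ ts hchild
  intro m
  induction m with
  | zero => rw [fgen_zero, if_pos rfl]
  | succ m ihm =>
    rw [fgen_succ μ ts hL m, ihm, G m, if_neg (Nat.succ_ne_zero m)]
    rcases eq_or_ne ts ([] : List PTree) with h0 | h0
    · subst h0
      rw [if_pos rfl]
      rcases eq_or_ne m 0 with hm | hm
      · subst hm
        simp [size_node, weight_node]
      · rw [if_neg hm, if_neg hm]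
        have hsz : size (PTree.node []) = 1 := by rw [size_node]; simp
        have hexp : μ 1 ^ (m + 1 - size (PTree.node [])) = μ 1 * μ 1 ^ (m - size (PTree.node [])) := by
          rw [hsz, show m + 1 - 1 = (m - 1) + 1 by omega, pow_succ]
          ring
        rw [hexp, hsz]
        simp only [Nat.add_sub_cancel, Nat.sub_self]
        rw [Nat.choose_zero_right, Nat.choose_zero_right]
        push_cast
        ring
    · rw [if_neg h0]
      set T := (ts.map size).sum with hT
      have hT1 : 1 ≤ T := tsize_pos ts h0
      have hsize : size (PTree.node ts) = 1 + T := size_node ts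
      have hw : weight μ (PTree.node ts) = μ ts.length * (ts.map (weight μ)).prod :=
        weight_node μ ts
      rcases eq_or_ne m 0 with hm | hm
      · subst hm
        rw [if_pos rfl, if_pos rfl, hsize]
        rw [show (1 + T) - 1 = T by omega, Nat.choose_eq_zero_of_lt (by omega)]
        simp
      · rw [if_neg hm, if_neg hm, hsize, hw, show (1 + T) - 1 = T by omega]
        rcases lt_or_ge m T with hlt | hle
        · rw [Nat.choose_eq_zero_of_lt (by omega), Nat.choose_eq_zero_of_lt (by omega),
            Nat.choose_eq_zero_of_lt (by omega)]
          simp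
        rcases eq_or_lt_of_le hle with heq | hgt
        · rw [← heq, show T + 1 - 1 = T by omega, Nat.choose_self,
            Nat.choose_eq_zero_of_lt (show T - 1 < T by omega), Nat.choose_self,
            show T + 1 - (1 + T) = 0 by omega, show T - T = 0 by omega]
          push_cast
          ring
        · have h2 : (m - 1) + 1 = m := by omega
          have h3 : (T - 1) + 1 = T := by omega
          have hpascal := Nat.choose_succ_succ (m - 1) (T - 1)
          simp only [Nat.succ_eq_add_one, h2, h3] at hpascal
          rw [show m + 1 - 1 = m by omega, hpascal,
            show m + 1 - (1 + T) = (m - (1 + T)) + 1 by omega, pow_succ,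
            show m - T = (m - (1 + T)) + 1 by omega, pow_succ]
          push_cast
          ring
  end PTree

namespace PTree

theorem len_le_leaves (ts : List PTree) : ts.length ≤ leaves (.node ts) := by
  rcases eq_or_ne ts ([] : List PTree) with h | h
  · subst h; simp [leaves_nil]
  · rw [leaves_node _ h]
    calc ts.length = (ts.map (fun _ => 1)).sum := by simp
    _ ≤ (ts.map leaves).sum := List.sum_le_sum (fun t _ => leaves_pos t)

theorem leaves_child_le {t : PTree} {ts : List PTree} (h : t ∈ ts) :
    leaves t ≤ leaves (.node ts) := by
  rw [leaves_node _ (by rintro rfl; simp at h)]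
  exact List.single_le_sum (fun x _ => Nat.zero_le x) _ (List.mem_map_of_mem h)

theorem countDeg_bound : ∀ t : PTree, ∀ i : ℕ, leaves t < i → countDeg i t = 0 := by
  apply strongRec (P := fun t => ∀ i : ℕ, leaves t < i → countDeg i t = 0)
  intro ts ih i hi
  rw [countDeg_node, if_neg, List.sum_eq_zero, add_zero]
  · intro x hx
    obtain ⟨t, ht, rfl⟩ := List.mem_map.mp hx
    exact ih t ht i (lt_of_le_of_lt (leaves_child_le ht) hi)
  · intro hc
    have := len_le_leaves ts
    omega

theorem countDeg_zero_eq_leaves : ∀ t : PTree, countDeg 0 t = leaves t := by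
  apply strongRec
  intro ts ih
  rcases eq_or_ne ts ([] : List PTree) with h | h
  · subst h; rw [countDeg_node, leaves_nil]; simp
  · rw [countDeg_node, leaves_node _ h, if_neg (by simpa using fun hc => h (List.length_eq_zero_iff.mp hc)),
      zero_add]
    congr 1
    apply List.map_congr_left
    exact fun t ht => ih t ht

theorem countDeg_one_noUnary : ∀ t : PTree, t.noUnary → countDeg 1 t = 0 := by
  apply strongRec (P := fun t => t.noUnary → countDeg 1 t = 0)
  intro ts ih hnu
  obtain ⟨hL, hnuts⟩ := (noUnary_node ts).mp hnu
  rw [countDeg_node, if_neg hL, zero_add, List.sum_eq_zero]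
  intro x hx
  obtain ⟨t, ht, rfl⟩ := List.mem_map.mp hx
  exact ih t ht (hnuts t ht)

theorem list_prod_pow (c : ℝ) (g : PTree → ℕ) (l : List PTree) :
    (l.map (fun x => c ^ g x)).prod = c ^ (l.map g).sum := by
  induction l with
  | nil => simp
  | cons x l ihl => simp [ihl, pow_add]

theorem list_prod_finset_prod (l : List PTree) (s : Finset ℕ) (f : PTree → ℕ → ℝ) :
    (l.map (fun x => ∏ i ∈ s, f x i)).prod = ∏ i ∈ s, (l.map (fun x => f x i)).prod := by
  induction l with
  | nil => simp
  | cons x l ihl => simp [ihl, Finset.prod_mul_distrib]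

theorem weight_prod (μ : ℕ → ℝ) : ∀ t : PTree, ∀ M : ℕ,
    (∀ i, M ≤ i → countDeg i t = 0) →
    weight μ t = ∏ i ∈ Finset.range M, μ i ^ countDeg i t := by
  apply strongRec (P := fun t => ∀ M : ℕ, (∀ i, M ≤ i → countDeg i t = 0) →
    weight μ t = ∏ i ∈ Finset.range M, μ i ^ countDeg i t)
  intro ts ih M hM
  have hlen : ts.length < M := by
    by_contra hc
    have := hM ts.length (by omega)
    rw [countDeg_node, if_pos rfl] at this
    omega
  have hchild : ∀ t ∈ ts, ∀ i, M ≤ i → countDeg i t = 0 := by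
    intro t ht i hi
    have h0 := hM i hi
    rw [countDeg_node] at h0
    have hsum : (List.map (countDeg i) ts).sum = 0 := by omega
    exact List.sum_eq_zero_iff.mp hsum _ (List.mem_map_of_mem ht)
  rw [weight_node]
  have h1 : (ts.map (weight μ)).prod
      = (ts.map (fun t => ∏ i ∈ Finset.range M, μ i ^ countDeg i t)).prod := by
    congr 1
    apply List.map_congr_left
    exact fun t ht => ih t ht M (hchild t ht)
  rw [h1, list_prod_finset_prod]
  have h2 : ∀ i ∈ Finset.range M,
      (ts.map (fun x => μ i ^ countDeg i x)).prod = μ i ^ (ts.map (countDeg i)).sum := by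
    intro i _
    rw [list_prod_pow]
  rw [Finset.prod_congr rfl h2]
  have h3 : ∀ i ∈ Finset.range M,
      μ i ^ countDeg i (.node ts)
        = μ i ^ (if ts.length = i then 1 else 0) * μ i ^ (ts.map (countDeg i)).sum := by
    intro i _
    rw [countDeg_node, pow_add]
  rw [Finset.prod_congr rfl h3, Finset.prod_mul_distrib]
  congr 1
  rw [Finset.prod_eq_single ts.length]
  · rw [if_pos rfl, pow_one]
  · intro i _ hne
    rw [if_neg (fun hc => hne hc.symm), pow_zero]
  · intro hc
    exact absurd (Finset.mem_range.mpr hlen) hc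

end PTree

open scoped Classical

/-- For an offspring distribution `μ` with `μ(1) > 0`, a `μ`-BGW tree `T` with reduced tree
`R`, and a tree `a` with `k` leaves and no out-degree-one vertex:
`P(R = a, T ∈ 𝕋ⁿᵏ) = C(n-1,|a|-1)·μ(0)^k·μ(1)^{n-|a|}·∏_{i≥2} μ(i)^{φ_i(a)}`. -/
theorem stmt_14 (μ : ℕ → ℝ) (hpos : ∀ i, 0 ≤ μ i) (hsum : HasSum μ 1) (hμ1 : 0 < μ 1)
    (n k : ℕ) (hk : 1 ≤ k) (a : PTree) (ha_leaves : a.leaves = k) (ha : a.noUnary)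
    (han : a.size ≤ n) :
    (∑' τ : PTree, if τ.size = n ∧ τ.leaves = k ∧ τ.reduce = a then τ.weight μ else 0)
      = (Nat.choose (n - 1) (a.size - 1) : ℝ) * μ 0 ^ k * μ 1 ^ (n - a.size) *
        ∏ i ∈ Finset.Icc 2 k, μ i ^ a.countDeg i := by
  have hsz : 1 ≤ a.size := PTree.size_pos a
  have hstep : (∑' τ : PTree, if τ.size = n ∧ τ.leaves = k ∧ τ.reduce = a then τ.weight μ else 0)
      = PTree.fgen μ a n := by
    rw [PTree.fgen]
    apply tsum_congr
    intro τ
    apply if_congr _ rfl rfl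
    constructor
    · rintro ⟨h1, h2, h3⟩; exact ⟨h1, h3⟩
    · rintro ⟨h1, h3⟩
      refine ⟨h1, ?_, h3⟩
      rw [← PTree.leaves_reduce τ, h3, ha_leaves]
  rw [hstep, PTree.fgen_closed μ a ha n, if_neg (by omega)]
  have hM : ∀ i, k + 1 ≤ i → PTree.countDeg i a = 0 := by
    intro i hi
    exact PTree.countDeg_bound a i (by rw [ha_leaves]; omega)
  rw [PTree.weight_prod μ a (k + 1) hM]
  rw [Finset.range_eq_Ico,
    ← Finset.prod_Ico_consecutive _ (by omega : 0 ≤ 2) (by omega : 2 ≤ k + 1)]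
  have h01 : ∏ i ∈ Finset.Ico 0 2, μ i ^ PTree.countDeg i a = μ 0 ^ k := by
    rw [show Finset.Ico 0 2 = ({0, 1} : Finset ℕ) by decide]
    rw [Finset.prod_insert (by simp), Finset.prod_singleton]
    rw [PTree.countDeg_zero_eq_leaves, ha_leaves, PTree.countDeg_one_noUnary a ha, pow_zero,
      mul_one]
  rw [h01, show Finset.Ico 2 (k + 1) = Finset.Icc 2 k from Finset.Ico_add_one_right_eq_Icc 2 k]
  ring
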